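/- Let R be a commutative ring, ≺ a monomial ordering on the standard monomial basis B of R⟨X₁,…,Xₙ⟩, and G a monic subset generating the ideal I = ⟨G⟩. Then G is a monic Gröbner basis of I if and only if, as R-modules, R⟨X₁,…,Xₙ⟩ is the internal direct sum of I and the R-span of the set N(G) of normal monomials (i.e., I + span_R N(G) = R⟨X₁,…,Xₙ⟩ and I ∩ span_R N(G) = 0), and in that case R⟨X₁,…,Xₙ⟩ is likewise the internal direct sum of the ideal ⟨LM(I)⟩ generated by the leading monomials of I and span_R N(G). -/

import Mathlib

noncomputable section
open MonoidAlgebra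
open scoped Classical

/-- Words in the alphabet `X_1, ..., X_n`: the standard monomial basis `B`. -/
abbrev Word (n : ℕ) : Type := FreeMonoid (Fin n)

/-- The free `R`-algebra `R⟨X_1, ..., X_n⟩`, realized as the monoid algebra of the
free monoid on `n` letters over `R`. -/
abbrev FreeAlg (R : Type) [CommRing R] (n : ℕ) : Type := MonoidAlgebra R (Word n)

variable {R : Type} [CommRing R] {n : ℕ}

/-- The monomial (word) `w` viewed as an element of the free algebra. -/
def mono (R : Type) [CommRing R] {n : ℕ} (w : Word n) : FreeAlg R n :=
  MonoidAlgebra.of R (Word n) w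

/-- A monomial ordering: a well-ordering on words compatible with two-sided multiplication. -/
def IsMonomialOrder (n : ℕ) [LinearOrder (Word n)] : Prop :=
  WellFoundedLT (Word n) ∧ ∀ w u v s : Word n, u < v → w * u * s < w * v * s

/-- The leading monomial of `f` (with junk value `1` for `f = 0`). -/
def LMon [LinearOrder (Word n)] (f : FreeAlg R n) : Word n :=
  if h : f = 0 then 1 else f.coeff.support.max'
    (Finsupp.support_nonempty_iff.mpr (MonoidAlgebra.coeff_eq_zero.not.mpr h))

/-- The leading coefficient of `f`. -/
def LCoef [LinearOrder (Word n)] (f : FreeAlg R n) : R := f.coeff (LMon f)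

/-- `f` is monic: it is nonzero and its leading coefficient is `1`. -/
def IsMonic [LinearOrder (Word n)] (f : FreeAlg R n) : Prop := f ≠ 0 ∧ LCoef f = 1

/-- `v` divides `u` as words: `u = w * v * s` for some words `w, s`. -/
def MDvd {n : ℕ} (v u : Word n) : Prop := ∃ w s : Word n, u = w * v * s

/-- `G` is a monic Gröbner basis of the two-sided ideal `I`: every element of `G` is monic,
and the leading monomial of every nonzero element of `I` is divisible by the leading
monomial of some element of `G`. -/
def IsMonicGB [LinearOrder (Word n)] (G : Set (FreeAlg R n))
    (I : TwoSidedIdeal (FreeAlg R n)) : Prop :=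
  (∀ g ∈ G, IsMonic g) ∧ ∀ f ∈ I, f ≠ 0 → ∃ g ∈ G, MDvd (LMon g) (LMon f)

/-- The set `N(G)` of normal words modulo `G`: words not divisible by any `LM(g)`, `g ∈ G`. -/
def NormalWords [LinearOrder (Word n)] (G : Set (FreeAlg R n)) : Set (Word n) :=
  {u | ∀ g ∈ G, ¬ MDvd (LMon g) u}

/-- The set `LM(S)` of leading monomials of the nonzero elements of `S`. -/
def LMset [LinearOrder (Word n)] (S : Set (FreeAlg R n)) : Set (Word n) :=
  {w | ∃ f ∈ S, f ≠ 0 ∧ LMon f = w}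

/-- `R⟨X⟩` is the internal direct sum (as `R`-modules) of the set `T` and the `R`-span of
the monomials in `N(G)`. -/
def DirectDecomp [LinearOrder (Word n)] (T : Set (FreeAlg R n))
    (G : Set (FreeAlg R n)) : Prop :=
  (∀ f : FreeAlg R n, ∃ a r : FreeAlg R n, a ∈ T ∧
      r ∈ Submodule.span R (mono R '' NormalWords G) ∧ f = a + r) ∧
  ∀ f : FreeAlg R n, f ∈ T → f ∈ Submodule.span R (mono R '' NormalWords G) → f = 0

section Aux

variable [LinearOrder (Word n)]

lemma lmon_mem_support {f : FreeAlg R n} (hf : f ≠ 0) : LMon f ∈ f.coeff.support := by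
  rw [LMon, dif_neg hf]; exact f.coeff.support.max'_mem _

lemma le_lmon {f : FreeAlg R n} (hf : f ≠ 0) {u : Word n} (hu : u ∈ f.coeff.support) :
    u ≤ LMon f := by
  rw [LMon, dif_neg hf]; exact f.coeff.support.le_max' u hu

lemma lcoef_ne_zero {f : FreeAlg R n} (hf : f ≠ 0) : f.coeff (LMon f) ≠ 0 :=
  Finsupp.mem_support_iff.mp (lmon_mem_support hf)

lemma mdvd_trans {a b c : Word n} (h1 : MDvd a b) (h2 : MDvd b c) : MDvd a c := by
  obtain ⟨w, s, rfl⟩ := h1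
  obtain ⟨w', s', rfl⟩ := h2
  exact ⟨w' * w, s * s', by simp [mul_assoc]⟩

lemma not_normal_iff {G : Set (FreeAlg R n)} {m : Word n} :
    m ∉ NormalWords G ↔ ∃ g ∈ G, MDvd (LMon g) m := by
  simp [NormalWords]

/-- The submodule of elements supported on `N`. -/
def suppSub (N : Set (Word n)) : Submodule R (FreeAlg R n) where
  carrier := {g | (g.coeff.support : Set (Word n)) ⊆ N}
  zero_mem' := by simp
  add_mem' := by
    intro a b ha hb u hu
    rcases Finset.mem_union.mp (Finsupp.support_add (g₁ := a.coeff) (g₂ := b.coeff) hu) with h | h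
    · exact ha h
    · exact hb h
  smul_mem' := by
    intro c a ha u hu
    exact ha (Finsupp.support_smul (b := c) (g := a.coeff) hu)

lemma mem_span_mono_iff {N : Set (Word n)} {f : FreeAlg R n} :
    f ∈ Submodule.span R (mono R '' N) ↔ (f.coeff.support : Set (Word n)) ⊆ N := by
  constructor
  · intro hf
    have hle : Submodule.span R (mono R '' N) ≤ suppSub (R := R) N := by
      rw [Submodule.span_le]
      rintro _ ⟨w, hw, rfl⟩ u hu
      have : u ∈ ({w} : Finset (Word n)) := by
        have := Finsupp.support_single_subset (a := w) (b := (1 : R))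
        exact this hu
      rwa [Finset.mem_singleton.mp this]
    exact hle hf
  · intro hs
    have : f = ∑ u ∈ f.coeff.support, (f.coeff u) • mono R u := by
      conv_lhs => rw [← MonoidAlgebra.sum_coeff_single f]
      rw [Finsupp.sum]
      refine Finset.sum_congr rfl ?_
      intro u _
      rw [mono, MonoidAlgebra.of_apply, MonoidAlgebra.smul_single', mul_one]
    rw [this]
    refine Submodule.sum_mem _ ?_
    intro u hu
    exact Submodule.smul_mem _ _ (Submodule.subset_span ⟨u, hs hu, rfl⟩)

lemma smul_mem_tsi (T : TwoSidedIdeal (FreeAlg R n)) (c : R) {x : FreeAlg R n}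
    (hx : x ∈ T) : c • x ∈ T := by
  rw [Algebra.smul_def]
  exact T.mul_mem_left _ _ hx

/-- The division algorithm with remainder supported on normal words. -/
lemma division (hord : IsMonomialOrder n) {G : Set (FreeAlg R n)}
    (T : TwoSidedIdeal (FreeAlg R n))
    (H : ∀ m : Word n, m ∉ NormalWords G →
      ∃ h : FreeAlg R n, h ∈ T ∧ h.coeff m = 1 ∧ ∀ u ∈ h.coeff.support, u ≤ m)
    (f : FreeAlg R n) :
    ∃ a r : FreeAlg R n, a ∈ T ∧ (r.coeff.support : Set (Word n)) ⊆ NormalWords G ∧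
      f = a + r ∧ (∀ u ∈ r.coeff.support, u ≤ LMon f) ∧
      (LMon f ∈ NormalWords G → r.coeff (LMon f) = f.coeff (LMon f)) := by
  obtain ⟨hwf, hcomp⟩ := hord
  suffices key : ∀ m : Word n, ∀ f : FreeAlg R n, f ≠ 0 → LMon f = m →
      ∃ a r : FreeAlg R n, a ∈ T ∧ (r.coeff.support : Set (Word n)) ⊆ NormalWords G ∧
      f = a + r ∧ (∀ u ∈ r.coeff.support, u ≤ LMon f) ∧
      (LMon f ∈ NormalWords G → r.coeff (LMon f) = f.coeff (LMon f)) by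
    by_cases hf : f = 0
    · exact ⟨0, 0, T.zero_mem, by simp, by simp [hf], by simp, by simp [hf]⟩
    · exact key _ f hf rfl
  intro m
  refine hwf.wf.induction
    (C := fun m => ∀ f : FreeAlg R n, f ≠ 0 → LMon f = m →
      ∃ a r : FreeAlg R n, a ∈ T ∧ (r.coeff.support : Set (Word n)) ⊆ NormalWords G ∧
      f = a + r ∧ (∀ u ∈ r.coeff.support, u ≤ LMon f) ∧
      (LMon f ∈ NormalWords G → r.coeff (LMon f) = f.coeff (LMon f))) m ?_
  clear m
  rintro m IH f hf rfl
  by_cases hN : LMon f ∈ NormalWords G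
  · -- leading monomial is normal: move its term to the remainder
    set c : R := f.coeff (LMon f) with hcdef
    set f₁ : FreeAlg R n := f - MonoidAlgebra.single (LMon f) c with hf₁def
    have hf₁top : f₁.coeff (LMon f) = 0 := by
      rw [hf₁def, MonoidAlgebra.coeff_sub, Finsupp.sub_apply, MonoidAlgebra.coeff_single,
          Finsupp.single_eq_same, sub_self]
    have hsupp₁ : ∀ u ∈ f₁.coeff.support, u < LMon f := by
      intro u hu
      have hune : u ≠ LMon f := by
        rintro rfl
        exact Finsupp.mem_support_iff.mp hu hf₁top
      have hfu : f.coeff u ≠ 0 := by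
        have := Finsupp.mem_support_iff.mp hu
        rwa [hf₁def, MonoidAlgebra.coeff_sub, Finsupp.sub_apply, MonoidAlgebra.coeff_single,
            Finsupp.single_eq_of_ne' (Ne.symm hune),
          sub_zero] at this
      exact lt_of_le_of_ne (le_lmon hf (Finsupp.mem_support_iff.mpr hfu)) hune
    by_cases h1 : f₁ = 0
    · have hfeq : f = MonoidAlgebra.single (LMon f) c := by
        have := sub_eq_zero.mp h1
        exact this
      refine ⟨0, f, T.zero_mem, ?_, (zero_add f).symm,
        fun u hu => le_lmon hf hu, fun _ => rfl⟩
      intro u hu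
      have : u ∈ ({LMon f} : Finset (Word n)) := by
        rw [hfeq] at hu
        exact Finsupp.support_single_subset hu
      rwa [Finset.mem_singleton.mp this]
    · obtain ⟨a₁, r₁, ha₁, hr₁N, heq₁, hr₁le, _⟩ :=
        IH (LMon f₁) (hsupp₁ _ (lmon_mem_support h1)) f₁ h1 rfl
      have hr₁lt : ∀ u ∈ r₁.coeff.support, u < LMon f := fun u hu =>
        lt_of_le_of_lt (hr₁le u hu) (hsupp₁ _ (lmon_mem_support h1))
      refine ⟨a₁, MonoidAlgebra.single (LMon f) c + r₁, ha₁, ?_, ?_, ?_, ?_⟩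
      · intro u hu
        rcases Finset.mem_union.mp (Finsupp.support_add
          (g₁ := (MonoidAlgebra.single (LMon f) c).coeff) (g₂ := r₁.coeff) hu) with h | h
        · rwa [Finset.mem_singleton.mp (Finsupp.support_single_subset h)]
        · exact hr₁N h
      · have h3 : f = a₁ + r₁ + MonoidAlgebra.single (LMon f) c := by
          rw [← heq₁, hf₁def]; abel
        exact h3.trans (by abel)
      · intro u hu
        rcases Finset.mem_union.mp (Finsupp.support_add
          (g₁ := (MonoidAlgebra.single (LMon f) c).coeff) (g₂ := r₁.coeff) hu) with h | h
        · rw [Finset.mem_singleton.mp (Finsupp.support_single_subset h)]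
        · exact le_of_lt (hr₁lt u h)
      · intro _
        have hr₁0 : r₁.coeff (LMon f) = 0 := by
          by_contra hne
          exact absurd rfl (ne_of_lt (hr₁lt _ (Finsupp.mem_support_iff.mpr hne)))
        rw [MonoidAlgebra.coeff_add, Finsupp.add_apply, hr₁0, MonoidAlgebra.coeff_single,
            Finsupp.single_eq_same, add_zero, hcdef]
  · -- leading monomial is reducible: subtract a multiple of the divisor
    obtain ⟨h, hhT, hh1, hhle⟩ := H _ hN
    set c : R := f.coeff (LMon f) with hcdef
    set f₁ : FreeAlg R n := f - c • h with hf₁def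
    have hf₁top : f₁.coeff (LMon f) = 0 := by
      rw [hf₁def, MonoidAlgebra.coeff_sub, Finsupp.sub_apply, MonoidAlgebra.coeff_smul_apply, hh1, smul_eq_mul, mul_one,
        sub_self]
    have hsupp₁ : ∀ u ∈ f₁.coeff.support, u < LMon f := by
      intro u hu
      have hune : u ≠ LMon f := by
        rintro rfl
        exact Finsupp.mem_support_iff.mp hu hf₁top
      have hor : f.coeff u ≠ 0 ∨ h.coeff u ≠ 0 := by
        by_contra hcon
        push_neg at hcon
        have := Finsupp.mem_support_iff.mp hu
        rw [hf₁def, MonoidAlgebra.coeff_sub, Finsupp.sub_apply, MonoidAlgebra.coeff_smul_apply, hcon.1, hcon.2,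
          smul_zero, sub_zero] at this
        exact this rfl
      refine lt_of_le_of_ne ?_ hune
      rcases hor with h' | h'
      · exact le_lmon hf (Finsupp.mem_support_iff.mpr h')
      · exact hhle u (Finsupp.mem_support_iff.mpr h')
    have hchT : c • h ∈ T := smul_mem_tsi T c hhT
    by_cases h1 : f₁ = 0
    · have hfeq : f = c • h := sub_eq_zero.mp h1
      exact ⟨c • h, 0, hchT, by simp, by rw [hfeq, add_zero], by simp,
        fun hmem => absurd hmem hN⟩
    · obtain ⟨a₁, r₁, ha₁, hr₁N, heq₁, hr₁le, _⟩ :=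
        IH (LMon f₁) (hsupp₁ _ (lmon_mem_support h1)) f₁ h1 rfl
      refine ⟨c • h + a₁, r₁, T.add_mem hchT ha₁, hr₁N, ?_, ?_, fun hmem => absurd hmem hN⟩
      · have h3 : f = c • h + (a₁ + r₁) := by
          rw [← heq₁, hf₁def]; abel
        exact h3.trans (by abel)
      · intro u hu
        exact le_of_lt (lt_of_le_of_lt (hr₁le u hu) (hsupp₁ _ (lmon_mem_support h1)))

end Aux

section Aux2

variable [LinearOrder (Word n)]

/-- The division hypothesis holds for the ideal generated by `G`. -/
lemma H_spanG (hord : IsMonomialOrder n) {G : Set (FreeAlg R n)}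
    (hmonic : ∀ g ∈ G, IsMonic g) :
    ∀ m : Word n, m ∉ NormalWords G →
      ∃ h : FreeAlg R n, h ∈ TwoSidedIdeal.span G ∧ h.coeff m = 1 ∧
        ∀ u ∈ h.coeff.support, u ≤ m := by
  intro m hm
  obtain ⟨g, hg, w, s, rfl⟩ := not_normal_iff.mp hm
  obtain ⟨hg0, hg1⟩ := hmonic g hg
  refine ⟨MonoidAlgebra.single w 1 * g * MonoidAlgebra.single s 1, ?_, ?_, ?_⟩
  · exact TwoSidedIdeal.mul_mem_right _ _ _
      (TwoSidedIdeal.mul_mem_left _ _ _ (TwoSidedIdeal.subset_span hg))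
  · rw [MonoidAlgebra.coeff_mul_single_eq_coeff_mul _ (fun a _ => mul_left_inj s),
      MonoidAlgebra.coeff_single_mul_eq_mul_coeff _ (fun a _ => mul_right_inj w),
      mul_one, one_mul]
    exact hg1
  · intro u hu
    have h2 := MonoidAlgebra.support_coeff_mul_subset (MonoidAlgebra.single w (1:R) * g)
      (MonoidAlgebra.single s 1) hu
    rw [Finset.mem_mul] at h2
    obtain ⟨x, hx, y, hy, rfl⟩ := h2
    have h3 := MonoidAlgebra.support_coeff_mul_subset (MonoidAlgebra.single w (1:R)) g hx
    rw [Finset.mem_mul] at h3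
    obtain ⟨p, hp, v, hv, rfl⟩ := h3
    rw [Finset.mem_singleton.mp (Finsupp.support_single_subset hp),
      Finset.mem_singleton.mp (Finsupp.support_single_subset hy)]
    rcases (le_lmon hg0 hv).lt_or_eq with h' | h'
    · exact le_of_lt (hord.2 w v (LMon g) s h')
    · rw [h']

/-- The division hypothesis holds for the monomial ideal of leading monomials. -/
lemma H_LM (hord : IsMonomialOrder n) {G : Set (FreeAlg R n)}
    (hmonic : ∀ g ∈ G, IsMonic g) :
    ∀ m : Word n, m ∉ NormalWords G →
      ∃ h : FreeAlg R n,
        h ∈ TwoSidedIdeal.span (mono R '' LMset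
          ((TwoSidedIdeal.span G : TwoSidedIdeal (FreeAlg R n)) : Set (FreeAlg R n))) ∧
        h.coeff m = 1 ∧ ∀ u ∈ h.coeff.support, u ≤ m := by
  intro m hm
  obtain ⟨g, hg, w, s, rfl⟩ := not_normal_iff.mp hm
  obtain ⟨hg0, _⟩ := hmonic g hg
  refine ⟨MonoidAlgebra.single (w * LMon g * s) 1, ?_, Finsupp.single_eq_same, ?_⟩
  · have hmem : mono R (LMon g) ∈ mono R '' LMset
        ((TwoSidedIdeal.span G : TwoSidedIdeal (FreeAlg R n)) : Set (FreeAlg R n)) :=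
      ⟨LMon g, ⟨g, TwoSidedIdeal.subset_span hg, hg0, rfl⟩, rfl⟩
    have : MonoidAlgebra.single (w * LMon g * s) (1:R) =
        MonoidAlgebra.single w 1 * mono R (LMon g) * MonoidAlgebra.single s 1 := by
      rw [mono, MonoidAlgebra.of_apply, MonoidAlgebra.single_mul_single,
        MonoidAlgebra.single_mul_single, one_mul, one_mul]
    rw [this]
    exact TwoSidedIdeal.mul_mem_right _ _ _
      (TwoSidedIdeal.mul_mem_left _ _ _ (TwoSidedIdeal.subset_span hmem))
  · intro u hu
    rw [Finset.mem_singleton.mp (Finsupp.support_single_subset hu)]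

/-- Elements of the two-sided ideal generated by monomials in `S` are supported on
words divisible by elements of `S`. -/
lemma support_of_mem_monomial_ideal {S : Set (Word n)} {f : FreeAlg R n}
    (hf : f ∈ TwoSidedIdeal.span (mono R '' S)) :
    ∀ u ∈ f.coeff.support, ∃ v ∈ S, MDvd v u := by
  let J : TwoSidedIdeal (FreeAlg R n) := TwoSidedIdeal.mk'
    {g : FreeAlg R n | ∀ u ∈ g.coeff.support, ∃ v ∈ S, MDvd v u}
    (by simp)
    (by
      intro x y hx hy u hu
      rcases Finset.mem_union.mp (Finsupp.support_add (g₁ := x.coeff) (g₂ := y.coeff) hu) with h | h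
      · exact hx u h
      · exact hy u h)
    (by
      intro x hx u hu
      exact hx u (by rwa [MonoidAlgebra.coeff_neg, Finsupp.support_neg] at hu))
    (by
      intro x y hy u hu
      have h2 := MonoidAlgebra.support_coeff_mul_subset x y hu
      rw [Finset.mem_mul] at h2
      obtain ⟨a, _, b, hb, rfl⟩ := h2
      obtain ⟨v, hv, w', s', rfl⟩ := hy b hb
      exact ⟨v, hv, a * w', s', by simp [mul_assoc]⟩)
    (by
      intro x y hx u hu
      have h2 := MonoidAlgebra.support_coeff_mul_subset x y hu
      rw [Finset.mem_mul] at h2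
      obtain ⟨a, ha, b, _, rfl⟩ := h2
      obtain ⟨v, hv, w', s', rfl⟩ := hx a ha
      exact ⟨v, hv, w', s' * b, by simp [mul_assoc]⟩)
  have hJ : f ∈ J := by
    refine TwoSidedIdeal.mem_span_iff.mp hf J ?_
    rintro _ ⟨v, hv, rfl⟩
    rw [SetLike.mem_coe, TwoSidedIdeal.mem_mk']
    intro u hu
    have : u = v := by
      have := Finsupp.support_single_subset (a := v) (b := (1:R))
      exact Finset.mem_singleton.mp (this hu)
    exact ⟨v, hv, 1, 1, by simp [this]⟩
  rw [TwoSidedIdeal.mem_mk'] at hJ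
  exact hJ

end Aux2

/-- For a monic subset `G` generating `I = ⟨G⟩`: `G` is a monic Gröbner
basis of `I` iff `R⟨X⟩ = I ⊕ span_R N(G)`, and in that case also
`R⟨X⟩ = ⟨LM(I)⟩ ⊕ span_R N(G)`. -/
theorem monicGB_iff_module_decomposition [LinearOrder (Word n)] (hord : IsMonomialOrder n)
    (G : Set (FreeAlg R n)) (hmonic : ∀ g ∈ G, IsMonic g) :
    (IsMonicGB G (TwoSidedIdeal.span G) ↔
      DirectDecomp ((TwoSidedIdeal.span G : TwoSidedIdeal (FreeAlg R n)) :
        Set (FreeAlg R n)) G) ∧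
    (IsMonicGB G (TwoSidedIdeal.span G) →
      DirectDecomp
        ((TwoSidedIdeal.span (mono R '' LMset
            ((TwoSidedIdeal.span G : TwoSidedIdeal (FreeAlg R n)) : Set (FreeAlg R n))) :
          TwoSidedIdeal (FreeAlg R n)) : Set (FreeAlg R n)) G) := by
  constructor
  · constructor
    · -- GB → direct decomposition with I
      intro hGB
      constructor
      · intro f
        obtain ⟨a, r, haI, hrs, heq, -, -⟩ :=
          division hord (TwoSidedIdeal.span G) (H_spanG hord hmonic) f
        exact ⟨a, r, haI, mem_span_mono_iff.mpr hrs, heq⟩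
      · intro f hfI hfspan
        by_contra hf0
        obtain ⟨g, hg, hd⟩ := hGB.2 f hfI hf0
        exact (mem_span_mono_iff.mp hfspan) (lmon_mem_support hf0) g hg hd
    · -- direct decomposition → GB
      intro hdec
      refine ⟨hmonic, fun f hfI hf0 => ?_⟩
      by_contra hnd
      push_neg at hnd
      have hN : LMon f ∈ NormalWords G := fun g hg hd => hnd g hg hd
      obtain ⟨a, r, haI, hrs, heq, -, hrl⟩ :=
        division hord (TwoSidedIdeal.span G) (H_spanG hord hmonic) f
      have hrI : r ∈ TwoSidedIdeal.span G := by
        have hre : r = f - a := by rw [heq]; abel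
        rw [hre]
        exact TwoSidedIdeal.sub_mem _ hfI haI
      have hr0 : r = 0 := hdec.2 r hrI (mem_span_mono_iff.mpr hrs)
      have := hrl hN
      rw [hr0] at this
      exact lcoef_ne_zero hf0 this.symm
  · -- GB → direct decomposition with the monomial ideal
    intro hGB
    constructor
    · intro f
      obtain ⟨a, r, haT, hrs, heq, -, -⟩ :=
        division hord _ (H_LM hord hmonic) f
      exact ⟨a, r, haT, mem_span_mono_iff.mpr hrs, heq⟩
    · intro f hfT hfspan
      by_contra hf0
      have hu := lmon_mem_support hf0
      obtain ⟨v, hvS, hdvd⟩ := support_of_mem_monomial_ideal hfT (LMon f) hu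
      obtain ⟨f₀, hf₀I, hf₀0, rfl⟩ := hvS
      obtain ⟨g, hg, hd⟩ := hGB.2 f₀ hf₀I hf₀0
      exact (mem_span_mono_iff.mp hfspan hu) g hg (mdvd_trans hd hdvd)
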